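/- If ‖W⁻¹ΔW‖₂ < 1, then the perturbed PGCS equation has a unique solution (ΔX_1, ΔY_1, …, ΔX_p, ΔY_p), and it satisfies ‖Δz‖₂ ≤ ‖W⁻¹(Δg − ΔW z)‖₂ / (1 − ‖W⁻¹ΔW‖₂). -/

import Mathlib

open Matrix
open scoped Kronecker

noncomputable section

/-- column-stacking `vec` of a matrix, indexed by (column, row). -/
def vecM {a b : ℕ} (M : Matrix (Fin a) (Fin b) ℝ) : Fin b × Fin a → ℝ :=
  fun ji => M ji.2 ji.1

/-- Euclidean norm of a finitely-indexed real vector. -/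
def l2norm {ι : Type*} [Fintype ι] (v : ι → ℝ) : ℝ :=
  Real.sqrt (∑ i, v i ^ 2)

/-- Frobenius norm of a real matrix. -/
def frob {ι κ : Type*} [Fintype ι] [Fintype κ] (M : Matrix ι κ ℝ) : ℝ :=
  Real.sqrt (∑ i, ∑ j, M i j ^ 2)

/-- Spectral norm of a real matrix: supremum of `‖M v‖₂` over the closed unit ball. -/
def specNorm {ι κ : Type*} [Fintype ι] [Fintype κ] (M : Matrix ι κ ℝ) : ℝ :=
  sSup ((fun v => l2norm (M.mulVec v)) '' {v | l2norm v ≤ 1})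

/-- sup-norm (`‖·‖∞`) of a finitely-indexed real vector. -/
def linf {ι : Type*} [Fintype ι] (v : ι → ℝ) : ℝ := ⨆ i, |v i|

/-- max-row-sum (∞-operator) norm of a real matrix. -/
def rowSumNorm {ι κ : Type*} [Fintype ι] [Fintype κ] (M : Matrix ι κ ℝ) : ℝ :=
  ⨆ i, ∑ j, |M i j|

/-- max-norm (`‖·‖_max`) of a real matrix. -/
def maxNorm {ι κ : Type*} [Fintype ι] [Fintype κ] (M : Matrix ι κ ℝ) : ℝ :=
  ⨆ i, ⨆ j, |M i j|

/-- entrywise absolute value of a matrix. -/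
def matAbs {ι κ : Type*} (M : Matrix ι κ ℝ) : Matrix ι κ ℝ := M.map (fun x => |x|)

/-- spectral radius (maximum modulus of the complex eigenvalues) of a real square matrix. -/
def specRad {ι : Type*} [Fintype ι] [DecidableEq ι] (M : Matrix ι ι ℝ) : ENNReal :=
  spectralRadius ℂ (M.map (fun x => (x : ℂ)))

/-- index type for the stacked vector `z = (vec X₁; vec Y₁; …; vec X_p; vec Y_p)`:
component `(k, 0, ·)` holds `vec X_k` and `(k, 1, ·)` holds `vec Y_k`. -/
abbrev BIdx (m n p : ℕ) := Fin p × Fin 2 × Fin n × Fin m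

/-- index type for the vec'd data `(vec A_k; vec B_k; vec E_k; vec C_k; vec D_k; vec F_k)`
of one period. -/
abbrev CIdx (m n : ℕ) :=
  (Fin m × Fin m) ⊕ (Fin n × Fin n) ⊕ (Fin n × Fin m) ⊕
  (Fin m × Fin m) ⊕ (Fin n × Fin n) ⊕ (Fin n × Fin m)

variable {m n p : ℕ}

/-- the stacked vector `(vec X₁; vec Y₁; …; vec X_p; vec Y_p)`. -/
def bigVec (X Y : Fin p → Matrix (Fin m) (Fin n) ℝ) : BIdx m n p → ℝ :=
  fun x => if x.2.1 = 0 then vecM (X x.1) x.2.2 else vecM (Y x.1) x.2.2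

/-- the coefficient matrix `W` of the PGCS equation: block row `(k,0)` has `Iₙ ⊗ A_k` in
block column `(k,0)` and `−(B_kᵀ ⊗ Iₘ)` in block column `(k,1)`; block row `(k,1)` has
`Iₙ ⊗ C_k` in block column `(k+1 mod p, 0)` and `−(D_kᵀ ⊗ Iₘ)` in block column `(k,1)`. -/
def Wmat [NeZero p] (A C : Fin p → Matrix (Fin m) (Fin m) ℝ)
    (B D : Fin p → Matrix (Fin n) (Fin n) ℝ) :
    Matrix (BIdx m n p) (BIdx m n p) ℝ :=
  Matrix.of fun x y =>
    if x.2.1 = 0 then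
      (if y.1 = x.1 ∧ y.2.1 = 0 then
        ((1 : Matrix (Fin n) (Fin n) ℝ) ⊗ₖ A x.1) x.2.2 y.2.2 else 0) +
      (if y.1 = x.1 ∧ y.2.1 = 1 then
        (-((B x.1)ᵀ ⊗ₖ (1 : Matrix (Fin m) (Fin m) ℝ))) x.2.2 y.2.2 else 0)
    else
      (if y.1 = x.1 + 1 ∧ y.2.1 = 0 then
        ((1 : Matrix (Fin n) (Fin n) ℝ) ⊗ₖ C x.1) x.2.2 y.2.2 else 0) +
      (if y.1 = x.1 ∧ y.2.1 = 1 then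
        (-((D x.1)ᵀ ⊗ₖ (1 : Matrix (Fin m) (Fin m) ℝ))) x.2.2 y.2.2 else 0)

/-- the block-diagonal matrix `Ĥ = diag(Ĥ⁽¹⁾,…,Ĥ⁽ᵖ⁾)` (also `H₁`, `H₂`) with block
`Ĥ⁽ᵏ⁾ = [α_k (X_kᵀ ⊗ Iₘ), −β_k (Iₙ ⊗ Y_k), −γ_k I, 0, 0, 0;
        0, 0, 0, ζ_k (X_{k+1}ᵀ ⊗ Iₘ), −τ_k (Iₙ ⊗ Y_k), −δ_k I]`. -/
def Hmat [NeZero p] (Xh Yh : Fin p → Matrix (Fin m) (Fin n) ℝ)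
    (al be ga ze ta de : Fin p → ℝ) :
    Matrix (BIdx m n p) (Fin p × CIdx m n) ℝ :=
  Matrix.of fun x y =>
    if y.1 = x.1 then
      if x.2.1 = 0 then
        (match y.2 with
        | Sum.inl a => al x.1 * (((Xh x.1)ᵀ ⊗ₖ (1 : Matrix (Fin m) (Fin m) ℝ)) x.2.2 a)
        | Sum.inr (Sum.inl b) =>
            -(be x.1 * (((1 : Matrix (Fin n) (Fin n) ℝ) ⊗ₖ Yh x.1) x.2.2 b))
        | Sum.inr (Sum.inr (Sum.inl e)) =>
            -(ga x.1 * ((1 : Matrix (Fin n × Fin m) (Fin n × Fin m) ℝ) x.2.2 e))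
        | _ => 0)
      else
        (match y.2 with
        | Sum.inr (Sum.inr (Sum.inr (Sum.inl c))) =>
            ze x.1 * (((Xh (x.1 + 1))ᵀ ⊗ₖ (1 : Matrix (Fin m) (Fin m) ℝ)) x.2.2 c)
        | Sum.inr (Sum.inr (Sum.inr (Sum.inr (Sum.inl d)))) =>
            -(ta x.1 * (((1 : Matrix (Fin n) (Fin n) ℝ) ⊗ₖ Yh x.1) x.2.2 d))
        | Sum.inr (Sum.inr (Sum.inr (Sum.inr (Sum.inr f)))) =>
            -(de x.1 * ((1 : Matrix (Fin n × Fin m) (Fin n × Fin m) ℝ) x.2.2 f))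
        | _ => 0)
    else 0

/-- the parameter vector `t = (vec A₁; vec B₁; vec E₁; vec C₁; vec D₁; vec F₁; …)`. -/
def tvec (A C : Fin p → Matrix (Fin m) (Fin m) ℝ)
    (B D : Fin p → Matrix (Fin n) (Fin n) ℝ)
    (E F : Fin p → Matrix (Fin m) (Fin n) ℝ) : Fin p × CIdx m n → ℝ :=
  fun y =>
    match y.2 with
    | Sum.inl a => vecM (A y.1) a
    | Sum.inr (Sum.inl b) => vecM (B y.1) b
    | Sum.inr (Sum.inr (Sum.inl e)) => vecM (E y.1) e
    | Sum.inr (Sum.inr (Sum.inr (Sum.inl c))) => vecM (C y.1) c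
    | Sum.inr (Sum.inr (Sum.inr (Sum.inr (Sum.inl d)))) => vecM (D y.1) d
    | Sum.inr (Sum.inr (Sum.inr (Sum.inr (Sum.inr f)))) => vecM (F y.1) f

/-- the matrix `A_k` encoded in a parameter vector `t`. -/
def pA (t : Fin p × CIdx m n → ℝ) (k : Fin p) : Matrix (Fin m) (Fin m) ℝ :=
  Matrix.of fun i j => t (k, Sum.inl (j, i))

/-- the matrix `B_k` encoded in a parameter vector `t`. -/
def pB (t : Fin p × CIdx m n → ℝ) (k : Fin p) : Matrix (Fin n) (Fin n) ℝ :=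
  Matrix.of fun i j => t (k, Sum.inr (Sum.inl (j, i)))

/-- the matrix `E_k` encoded in a parameter vector `t`. -/
def pE (t : Fin p × CIdx m n → ℝ) (k : Fin p) : Matrix (Fin m) (Fin n) ℝ :=
  Matrix.of fun i j => t (k, Sum.inr (Sum.inr (Sum.inl (j, i))))

/-- the matrix `C_k` encoded in a parameter vector `t`. -/
def pC (t : Fin p × CIdx m n → ℝ) (k : Fin p) : Matrix (Fin m) (Fin m) ℝ :=
  Matrix.of fun i j => t (k, Sum.inr (Sum.inr (Sum.inr (Sum.inl (j, i)))))

/-- the matrix `D_k` encoded in a parameter vector `t`. -/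
def pD (t : Fin p × CIdx m n → ℝ) (k : Fin p) : Matrix (Fin n) (Fin n) ℝ :=
  Matrix.of fun i j => t (k, Sum.inr (Sum.inr (Sum.inr (Sum.inr (Sum.inl (j, i))))))

/-- the matrix `F_k` encoded in a parameter vector `t`. -/
def pF (t : Fin p × CIdx m n → ℝ) (k : Fin p) : Matrix (Fin m) (Fin n) ℝ :=
  Matrix.of fun i j => t (k, Sum.inr (Sum.inr (Sum.inr (Sum.inr (Sum.inr (j, i))))))

/-- the matrix `W(t)` built from the parameter vector `t`. -/
def Wt [NeZero p] (t : Fin p × CIdx m n → ℝ) : Matrix (BIdx m n p) (BIdx m n p) ℝ :=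
  Wmat (pA t) (pC t) (pB t) (pD t)

/-- the right-hand side `g(t) = (vec E₁; vec F₁; …; vec E_p; vec F_p)`. -/
def gt (t : Fin p × CIdx m n → ℝ) : BIdx m n p → ℝ := bigVec (pE t) (pF t)

/-- the set of parameters for which `W(t)` is invertible. -/
def Dset (m n p : ℕ) [NeZero p] : Set (Fin p × CIdx m n → ℝ) := {t | IsUnit (Wt t)}

/-- the solution map `Ψ(t) = W(t)⁻¹ g(t)`. -/
def Psi [NeZero p] (t : Fin p × CIdx m n → ℝ) : BIdx m n p → ℝ := (Wt t)⁻¹.mulVec (gt t)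

/-- the solution matrix `X_k` read off from `Ψ(t)`. -/
def Xsol [NeZero p] (t : Fin p × CIdx m n → ℝ) (k : Fin p) : Matrix (Fin m) (Fin n) ℝ :=
  Matrix.of fun i j => Psi t (k, (0 : Fin 2), (j, i))

/-- the solution matrix `Y_k` read off from `Ψ(t)`. -/
def Ysol [NeZero p] (t : Fin p × CIdx m n → ℝ) (k : Fin p) : Matrix (Fin m) (Fin n) ℝ :=
  Matrix.of fun i j => Psi t (k, (1 : Fin 2), (j, i))

/-- the matrix `H₂(t)` (all tolerances equal to one), built from the solution `Ψ(t)`. -/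
def H2t [NeZero p] (t : Fin p × CIdx m n → ℝ) : Matrix (BIdx m n p) (Fin p × CIdx m n) ℝ :=
  Hmat (Xsol t) (Ysol t) 1 1 1 1 1 1

/-- the componentwise relative ball `B⁰(a, ε)`. -/
def B0 {ι : Type*} (a : ι → ℝ) (ε : ℝ) : Set (ι → ℝ) := {x | ∀ i, |x i - a i| ≤ ε * |a i|}

/-- the componentwise distance `d(x, a)`. -/
def cdist {ι : Type*} [Fintype ι] (x a : ι → ℝ) : ℝ :=
  ⨆ i, if a i = 0 then |x i - a i| else |x i - a i| / |a i|

section Helpers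
variable {ι κ : Type*} [Fintype ι] [Fintype κ]

lemma l2norm_eq_norm (v : ι → ℝ) :
    l2norm v = ‖(WithLp.equiv 2 (ι → ℝ)).symm v‖ := by
  rw [EuclideanSpace.norm_eq]
  simp [l2norm, Real.norm_eq_abs, sq_abs]

lemma l2norm_nonneg (v : ι → ℝ) : 0 ≤ l2norm v := Real.sqrt_nonneg _

lemma l2norm_zero : l2norm (0 : ι → ℝ) = 0 := by simp [l2norm]

lemma l2norm_eq_zero_iff {v : ι → ℝ} : l2norm v = 0 ↔ v = 0 := by
  rw [l2norm_eq_norm, norm_eq_zero]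
  constructor
  · intro h
    funext i
    have := congrFun (congrArg (WithLp.equiv 2 (ι → ℝ)) h) i
    simpa using this
  · rintro rfl; rw [WithLp.equiv_symm_apply, WithLp.toLp_zero]

lemma l2norm_sub_le (a b : ι → ℝ) : l2norm (a - b) ≤ l2norm a + l2norm b := by
  rw [l2norm_eq_norm, l2norm_eq_norm, l2norm_eq_norm, WithLp.equiv_symm_apply, WithLp.toLp_sub]
  exact norm_sub_le _ _

lemma l2norm_smul (c : ℝ) (v : ι → ℝ) : l2norm (c • v) = |c| * l2norm v := by
  rw [l2norm_eq_norm, l2norm_eq_norm, WithLp.equiv_symm_apply, WithLp.toLp_smul, norm_smul, Real.norm_eq_abs]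

lemma l2norm_neg (v : ι → ℝ) : l2norm (-v) = l2norm v := by
  simp [l2norm]

lemma frob_nonneg (M : Matrix ι κ ℝ) : 0 ≤ frob M := Real.sqrt_nonneg _

lemma l2norm_mulVec_le_frob (M : Matrix ι κ ℝ) (v : κ → ℝ) :
    l2norm (M.mulVec v) ≤ frob M * l2norm v := by
  have h1 : ∀ i, (M.mulVec v i) ^ 2 ≤ (∑ j, M i j ^ 2) * (∑ j, v j ^ 2) := fun i =>
    Finset.sum_mul_sq_le_sq_mul_sq _ _ _
  calc l2norm (M.mulVec v) = Real.sqrt (∑ i, (M.mulVec v i) ^ 2) := rfl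
    _ ≤ Real.sqrt (∑ i, (∑ j, M i j ^ 2) * (∑ j, v j ^ 2)) :=
        Real.sqrt_le_sqrt (Finset.sum_le_sum fun i _ => h1 i)
    _ = Real.sqrt ((∑ i, ∑ j, M i j ^ 2) * (∑ j, v j ^ 2)) := by rw [← Finset.sum_mul]
    _ = frob M * l2norm v := by
        exact Real.sqrt_mul (Finset.sum_nonneg fun i _ => Finset.sum_nonneg fun j _ => sq_nonneg _) _

lemma specNorm_bddAbove (M : Matrix ι κ ℝ) :
    BddAbove ((fun v => l2norm (M.mulVec v)) '' {v | l2norm v ≤ 1}) := by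
  refine ⟨frob M, ?_⟩
  rintro x ⟨v, hv, rfl⟩
  calc l2norm (M.mulVec v) ≤ frob M * l2norm v := l2norm_mulVec_le_frob M v
    _ ≤ frob M * 1 := by
        exact mul_le_mul_of_nonneg_left hv (frob_nonneg M)
    _ = frob M := mul_one _

lemma specNorm_nonneg (M : Matrix ι κ ℝ) : 0 ≤ specNorm M := by
  have h0 : l2norm (M.mulVec 0) ∈ (fun v => l2norm (M.mulVec v)) '' {v | l2norm v ≤ 1} :=
    ⟨0, by simp [Set.mem_setOf_eq, l2norm_zero], rfl⟩
  have := le_csSup (specNorm_bddAbove M) h0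
  rw [Matrix.mulVec_zero, l2norm_zero] at this
  exact this

lemma l2norm_mulVec_le_specNorm (M : Matrix ι κ ℝ) (v : κ → ℝ) :
    l2norm (M.mulVec v) ≤ specNorm M * l2norm v := by
  rcases eq_or_ne (l2norm v) 0 with h0 | h0
  · rw [l2norm_eq_zero_iff.mp h0]
    simp [Matrix.mulVec_zero, l2norm_zero]
  · have hpos : 0 < l2norm v := lt_of_le_of_ne (l2norm_nonneg v) (Ne.symm h0)
    set c : ℝ := (l2norm v)⁻¹ with hc
    have hcpos : 0 < c := inv_pos.mpr hpos
    have hu : l2norm (c • v) = 1 := by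
      rw [l2norm_smul, abs_of_pos hcpos, hc, inv_mul_cancel₀ h0]
    have hmem : l2norm (M.mulVec (c • v)) ∈
        (fun v => l2norm (M.mulVec v)) '' {v | l2norm v ≤ 1} :=
      ⟨c • v, le_of_eq hu, rfl⟩
    have hle := le_csSup (specNorm_bddAbove M) hmem
    rw [Matrix.mulVec_smul, l2norm_smul, abs_of_pos hcpos] at hle
    have : c * l2norm (M.mulVec v) ≤ specNorm M := hle
    calc l2norm (M.mulVec v) = (c * l2norm (M.mulVec v)) * l2norm v := by
          rw [hc]; field_simp
    _ ≤ specNorm M * l2norm v := mul_le_mul_of_nonneg_right this (le_of_lt hpos)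

lemma isUnit_one_add_of_specNorm_lt_one {ι : Type*} [Fintype ι] [DecidableEq ι]
    (K : Matrix ι ι ℝ) (h : specNorm K < 1) : IsUnit (1 + K) := by
  rw [Matrix.isUnit_iff_isUnit_det, isUnit_iff_ne_zero]
  intro hdet
  obtain ⟨v, hv, hzero⟩ := (Matrix.exists_mulVec_eq_zero_iff).mpr hdet
  rw [Matrix.add_mulVec, Matrix.one_mulVec] at hzero
  have hKv : K.mulVec v = -v := by
    have := eq_neg_of_add_eq_zero_right hzero
    simpa using this
  have hvpos : 0 < l2norm v := by
    rcases lt_or_eq_of_le (l2norm_nonneg v) with h1 | h1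
    · exact h1
    · exact absurd (l2norm_eq_zero_iff.mp h1.symm) hv
  have h1 : l2norm (K.mulVec v) = l2norm v := by rw [hKv, l2norm_neg]
  have h2 : l2norm (K.mulVec v) ≤ specNorm K * l2norm v := l2norm_mulVec_le_specNorm K v
  nlinarith

variable {m n p : ℕ}

lemma Wmat_mulVec [NeZero p] (A C : Fin p → Matrix (Fin m) (Fin m) ℝ)
    (B D : Fin p → Matrix (Fin n) (Fin n) ℝ) (X Y : Fin p → Matrix (Fin m) (Fin n) ℝ) :
    (Wmat A C B D).mulVec (bigVec X Y) =
      bigVec (fun k => A k * X k - Y k * B k) (fun k => C k * X (k + 1) - Y k * D k) := by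
  funext x
  obtain ⟨k, s, j, i⟩ := x
  fin_cases s
  · simp only [Matrix.mulVec, dotProduct, Wmat, bigVec, vecM, Matrix.of_apply,
      Fintype.sum_prod_type, Fin.sum_univ_two, Matrix.kroneckerMap_apply, Matrix.one_apply,
      Matrix.neg_apply, Matrix.transpose_apply, Matrix.sub_apply, Matrix.mul_apply]
    simp only [Fin.mk_zero, Fin.mk_one, show ((0 : Fin 2) = 0) = True from by simp,
      show ((0 : Fin 2) = 1) = False from by simp, show ((1 : Fin 2) = 0) = False from by simp,
      show ((1 : Fin 2) = 1) = True from by simp, if_true, if_false, and_true, and_false,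
      add_zero, zero_add, ite_true, ite_false]
    simp only [ite_mul, mul_ite, zero_mul, mul_zero, one_mul, mul_one, neg_mul,
      Finset.sum_add_distrib, Finset.sum_neg_distrib, Finset.sum_ite_irrel,
      Finset.sum_const_zero, Finset.sum_ite_eq, Finset.sum_ite_eq',
      Finset.mem_univ, if_true]
    rw [sub_eq_add_neg]
    congr 1
    exact congrArg Neg.neg (Finset.sum_congr rfl fun x _ => mul_comm _ _)
  · simp only [Matrix.mulVec, dotProduct, Wmat, bigVec, vecM, Matrix.of_apply,
      Fintype.sum_prod_type, Fin.sum_univ_two, Matrix.kroneckerMap_apply, Matrix.one_apply,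
      Matrix.neg_apply, Matrix.transpose_apply, Matrix.sub_apply, Matrix.mul_apply]
    simp only [Fin.mk_zero, Fin.mk_one, show ((0 : Fin 2) = 0) = True from by simp,
      show ((0 : Fin 2) = 1) = False from by simp, show ((1 : Fin 2) = 0) = False from by simp,
      show ((1 : Fin 2) = 1) = True from by simp, if_true, if_false, and_true, and_false,
      add_zero, zero_add, ite_true, ite_false]
    simp only [ite_mul, mul_ite, zero_mul, mul_zero, one_mul, mul_one, neg_mul,
      Finset.sum_add_distrib, Finset.sum_neg_distrib, Finset.sum_ite_irrel,
      Finset.sum_const_zero, Finset.sum_ite_eq, Finset.sum_ite_eq',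
      Finset.mem_univ, if_true]
    rw [sub_eq_add_neg]
    congr 1
    exact congrArg Neg.neg (Finset.sum_congr rfl fun x _ => mul_comm _ _)

lemma Wmat_add [NeZero p] (A C dA dC : Fin p → Matrix (Fin m) (Fin m) ℝ)
    (B D dB dD : Fin p → Matrix (Fin n) (Fin n) ℝ) :
    Wmat (fun k => A k + dA k) (fun k => C k + dC k) (fun k => B k + dB k)
        (fun k => D k + dD k) = Wmat A C B D + Wmat dA dC dB dD := by
  funext x y
  simp only [Wmat, Matrix.of_apply, Matrix.add_apply, Matrix.kroneckerMap_apply,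
    Matrix.neg_apply, Matrix.transpose_apply, Matrix.one_apply]
  split_ifs <;> ring

lemma bigVec_add (X Y dX dY : Fin p → Matrix (Fin m) (Fin n) ℝ) :
    bigVec (fun k => X k + dX k) (fun k => Y k + dY k) = bigVec X Y + bigVec dX dY := by
  funext x
  simp only [bigVec, vecM, Matrix.add_apply, Pi.add_apply]
  split_ifs <;> rfl

lemma bigVec_inj {X Y X' Y' : Fin p → Matrix (Fin m) (Fin n) ℝ}
    (h : bigVec X Y = bigVec X' Y') : X = X' ∧ Y = Y' := by
  constructor
  · funext k i j
    have := congrFun h (k, 0, j, i)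
    simpa [bigVec, vecM] using this
  · funext k i j
    have := congrFun h (k, 1, j, i)
    simpa [bigVec, vecM] using this

lemma bigVec_components (v : BIdx m n p → ℝ) :
    bigVec (fun k => Matrix.of fun i j => v (k, 0, j, i))
      (fun k => Matrix.of fun i j => v (k, 1, j, i)) = v := by
  funext x
  obtain ⟨k, s, j, i⟩ := x
  fin_cases s <;> simp [bigVec, vecM]

/-- if `‖W⁻¹ ΔW‖₂ < 1` then the perturbed PGCS equation has a unique
solution and `‖Δz‖₂ ≤ ‖W⁻¹(Δg − ΔW z)‖₂ / (1 − ‖W⁻¹ ΔW‖₂)`. -/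
theorem perturbed_unique_and_bound (m n p : ℕ) [NeZero m] [NeZero n] [NeZero p]
    (A C dA dC : Fin p → Matrix (Fin m) (Fin m) ℝ)
    (B D dB dD : Fin p → Matrix (Fin n) (Fin n) ℝ)
    (E F dE dF X Y : Fin p → Matrix (Fin m) (Fin n) ℝ)
    (hW : IsUnit (Wmat A C B D))
    (hsol : ∀ k : Fin p, A k * X k - Y k * B k = E k ∧ C k * X (k + 1) - Y k * D k = F k)
    (hpert : specNorm ((Wmat A C B D)⁻¹ * Wmat dA dC dB dD) < 1) :
    (∃! S : (Fin p → Matrix (Fin m) (Fin n) ℝ) × (Fin p → Matrix (Fin m) (Fin n) ℝ),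
        ∀ k : Fin p,
          (A k + dA k) * (X k + S.1 k) - (Y k + S.2 k) * (B k + dB k) = E k + dE k ∧
          (C k + dC k) * (X (k + 1) + S.1 (k + 1)) - (Y k + S.2 k) * (D k + dD k) =
            F k + dF k) ∧
      ∀ dX dY : Fin p → Matrix (Fin m) (Fin n) ℝ,
        (∀ k : Fin p,
          (A k + dA k) * (X k + dX k) - (Y k + dY k) * (B k + dB k) = E k + dE k ∧
          (C k + dC k) * (X (k + 1) + dX (k + 1)) - (Y k + dY k) * (D k + dD k) =
            F k + dF k) →
        l2norm (bigVec dX dY) ≤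
          l2norm ((Wmat A C B D)⁻¹.mulVec
              (bigVec dE dF - (Wmat dA dC dB dD).mulVec (bigVec X Y))) /
            (1 - specNorm ((Wmat A C B D)⁻¹ * Wmat dA dC dB dD)) := by
  set W := Wmat A C B D with hWdef
  set dW := Wmat dA dC dB dD with hdWdef
  have hz : W.mulVec (bigVec X Y) = bigVec E F := by
    rw [hWdef, Wmat_mulVec]
    have e1 : (fun k => A k * X k - Y k * B k) = E := funext fun k => (hsol k).1
    have e2 : (fun k => C k * X (k + 1) - Y k * D k) = F := funext fun k => (hsol k).2
    rw [e1, e2]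
  have hWdet : IsUnit W.det := (Matrix.isUnit_iff_isUnit_det W).mp hW
  have hK : IsUnit (1 + W⁻¹ * dW) := isUnit_one_add_of_specNorm_lt_one _ hpert
  have hWdW : W + dW = W * (1 + W⁻¹ * dW) := by
    rw [mul_add, mul_one, ← Matrix.mul_assoc, Matrix.mul_nonsing_inv _ hWdet, Matrix.one_mul]
  have hU : IsUnit (W + dW) := hWdW ▸ hW.mul hK
  have hUdet : IsUnit (W + dW).det := (Matrix.isUnit_iff_isUnit_det _).mp hU
  set r : BIdx m n p → ℝ := bigVec dE dF - dW.mulVec (bigVec X Y) with hrdef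
  have hequiv : ∀ dX dY : Fin p → Matrix (Fin m) (Fin n) ℝ,
      (∀ k : Fin p,
          (A k + dA k) * (X k + dX k) - (Y k + dY k) * (B k + dB k) = E k + dE k ∧
          (C k + dC k) * (X (k + 1) + dX (k + 1)) - (Y k + dY k) * (D k + dD k) =
            F k + dF k) ↔ (W + dW).mulVec (bigVec dX dY) = r := by
    intro dX dY
    have key : (Wmat (fun k => A k + dA k) (fun k => C k + dC k) (fun k => B k + dB k)
          (fun k => D k + dD k)).mulVec
          (bigVec (fun k => X k + dX k) (fun k => Y k + dY k)) =
        bigVec (fun k => (A k + dA k) * (X k + dX k) - (Y k + dY k) * (B k + dB k))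
          (fun k => (C k + dC k) * (X (k + 1) + dX (k + 1)) - (Y k + dY k) * (D k + dD k)) :=
      Wmat_mulVec _ _ _ _ _ _
    rw [Wmat_add, bigVec_add, Matrix.add_mulVec, Matrix.mulVec_add, Matrix.mulVec_add, hz]
      at key
    rw [← hWdef, ← hdWdef] at key
    constructor
    · intro h
      have e1 : (fun k => (A k + dA k) * (X k + dX k) - (Y k + dY k) * (B k + dB k))
          = (fun k => E k + dE k) := funext fun k => (h k).1
      have e2 : (fun k => (C k + dC k) * (X (k + 1) + dX (k + 1)) -
            (Y k + dY k) * (D k + dD k)) = (fun k => F k + dF k) := funext fun k => (h k).2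
      rw [e1, e2, bigVec_add] at key
      have : (W + dW).mulVec (bigVec dX dY) =
          (bigVec E F + bigVec dE dF) -
            (bigVec E F + dW.mulVec (bigVec X Y)) := by
        rw [← key, Matrix.add_mulVec]
        abel
      rw [this, hrdef]
      abel
    · intro h
      have h' := h
      rw [Matrix.add_mulVec, hrdef] at h'
      have key2 : bigVec (fun k => (A k + dA k) * (X k + dX k) -
            (Y k + dY k) * (B k + dB k))
          (fun k => (C k + dC k) * (X (k + 1) + dX (k + 1)) - (Y k + dY k) * (D k + dD k)) =
          bigVec (fun k => E k + dE k) (fun k => F k + dF k) := by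
        rw [← key, bigVec_add]
        linear_combination h'
      obtain ⟨hX, hY⟩ := bigVec_inj key2
      exact fun k => ⟨congrFun hX k, congrFun hY k⟩
  constructor
  · -- existence and uniqueness
    set v0 : BIdx m n p → ℝ := (W + dW)⁻¹.mulVec r with hv0
    have hsolv : (W + dW).mulVec v0 = r := by
      rw [hv0, Matrix.mulVec_mulVec, Matrix.mul_nonsing_inv _ hUdet, Matrix.one_mulVec]
    refine ⟨(fun k => Matrix.of fun i j => v0 (k, 0, j, i),
        fun k => Matrix.of fun i j => v0 (k, 1, j, i)), ?_, ?_⟩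
    · exact (hequiv _ _).mpr (by rw [bigVec_components]; exact hsolv)
    · rintro ⟨dX, dY⟩ hy
      have h1 : (W + dW).mulVec (bigVec dX dY) = r := (hequiv _ _).mp hy
      have h2 : bigVec dX dY = v0 := by
        have := congrArg (fun u => (W + dW)⁻¹.mulVec u) h1
        simpa [Matrix.mulVec_mulVec, Matrix.nonsing_inv_mul _ hUdet,
          Matrix.one_mulVec, hv0] using this
      have h3 : bigVec dX dY = bigVec (fun k => Matrix.of fun i j => v0 (k, 0, j, i))
          (fun k => Matrix.of fun i j => v0 (k, 1, j, i)) := by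
        rw [h2, bigVec_components]
      obtain ⟨hX, hY⟩ := bigVec_inj h3
      exact Prod.ext hX hY
  · -- the bound
    intro dX dY h
    have heq : (W + dW).mulVec (bigVec dX dY) = r := (hequiv dX dY).mp h
    set dz := bigVec dX dY with hdz
    have hdzeq : dz = W⁻¹.mulVec r - (W⁻¹ * dW).mulVec dz := by
      have h2 : W⁻¹.mulVec ((W + dW).mulVec dz) = W⁻¹.mulVec r := by rw [heq]
      rw [Matrix.add_mulVec, Matrix.mulVec_add, Matrix.mulVec_mulVec, Matrix.mulVec_mulVec,
        Matrix.nonsing_inv_mul _ hWdet, Matrix.one_mulVec] at h2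
      rw [← h2]
      abel
    have hb : l2norm dz ≤ l2norm (W⁻¹.mulVec r) +
        specNorm (W⁻¹ * dW) * l2norm dz := by
      calc l2norm dz = l2norm (W⁻¹.mulVec r - (W⁻¹ * dW).mulVec dz) := by rw [← hdzeq]
        _ ≤ l2norm (W⁻¹.mulVec r) + l2norm ((W⁻¹ * dW).mulVec dz) := l2norm_sub_le _ _
        _ ≤ _ := add_le_add le_rfl (l2norm_mulVec_le_specNorm _ _)
    have h1s : 0 < 1 - specNorm (W⁻¹ * dW) := by linarith
    rw [le_div_iff₀ h1s]
    nlinarith [l2norm_nonneg dz]
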